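/- For s ∈ (0,1), there exists a constant C_1 > 0 such that for all ξ ∈ Q_p with |ξ|_p ≥ p^{-N+1}, A_s(ξ) = ∫_{B_N} |χ(zξ) - 1|^2 / |z|_p^{2s+1} dz ≤ C_1 |ξ|_p^{2s}. -/

import Mathlib

open MeasureTheory Filter Topology

open Classical in
/-- The p-adic fractional part of `x`: the unique rational `r ∈ [0,1)` with denominator a
power of `p` such that `x - r` is a p-adic integer. -/
noncomputable def padicFract (p : ℕ) [Fact p.Prime] (x : ℚ_[p]) : ℚ :=
  if h : ∃ r : ℚ, ‖x - (r : ℚ_[p])‖ ≤ 1 ∧ 0 ≤ r ∧ r < 1 ∧ ∃ n : ℕ, (r * (p : ℚ) ^ n).den = 1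
  then h.choose else 0

/-- The standard additive character `χ(x) = exp(2πi {x}_p)` of `ℚ_p`. -/
noncomputable def padicChar (p : ℕ) [Fact p.Prime] (x : ℚ_[p]) : ℂ :=
  Complex.exp (2 * Real.pi * Complex.I * ((padicFract p x : ℝ) : ℂ))

noncomputable instance (p : ℕ) [Fact p.Prime] : MeasurableSpace ℚ_[p] := borel _
instance (p : ℕ) [Fact p.Prime] : BorelSpace ℚ_[p] := ⟨rfl⟩

section Aux
variable (p : ℕ) [hp : Fact p.Prime]

lemma aux_rat_eq_zero {r : ℚ} (h1 : |r| < 1) (h2 : ∃ n : ℕ, (r * (p : ℚ) ^ n).den = 1)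
    (h3 : ‖((r : ℚ_[p]))‖ ≤ 1) : r = 0 := by
  obtain ⟨n, hn⟩ := h2
  have hra : ((r * (p : ℚ) ^ n).num : ℚ) = r * (p : ℚ) ^ n := (Rat.den_eq_one_iff _).mp hn
  set a : ℤ := (r * (p : ℚ) ^ n).num with ha
  have hcast : ((a : ℚ_[p])) = (r : ℚ_[p]) * (p : ℚ_[p]) ^ n := by
    have := congrArg (fun q : ℚ => (q : ℚ_[p])) hra
    push_cast at this
    simpa using this
  have hnorm : ‖(a : ℚ_[p])‖ ≤ (p : ℝ) ^ (-n : ℤ) := by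
    rw [hcast, norm_mul, Padic.norm_p_pow]
    calc ‖(r : ℚ_[p])‖ * (p : ℝ) ^ (-n : ℤ) ≤ 1 * (p : ℝ) ^ (-n : ℤ) := by
          apply mul_le_mul_of_nonneg_right h3 (by positivity)
      _ = (p : ℝ) ^ (-n : ℤ) := one_mul _
  obtain ⟨b, hb⟩ := (Padic.norm_int_le_pow_iff_dvd a n).mp hnorm
  have hpn : ((p : ℚ)) ^ n ≠ 0 := by
    have : (p : ℚ) ≠ 0 := by exact_mod_cast hp.out.ne_zero
    positivity
  have hrb : r = (b : ℚ) := by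
    have : r * (p : ℚ) ^ n = (p : ℚ) ^ n * (b : ℚ) := by
      rw [← hra, hb]; push_cast; ring
    have := mul_left_cancel₀ hpn (by linarith [this] : (p:ℚ)^n * r = (p:ℚ)^n * (b:ℚ))
    exact this
  have hb1 : |(b : ℚ)| < 1 := hrb ▸ h1
  have : b = 0 := by
    have h' : |b| < 1 := by exact_mod_cast hb1
    have := abs_lt.mp h'
    omega
  simp [hrb, this]

lemma padicFract_eq_zero {x : ℚ_[p]} (hx : ‖x‖ ≤ 1) : padicFract p x = 0 := by
  have hex : ∃ r : ℚ, ‖x - (r : ℚ_[p])‖ ≤ 1 ∧ 0 ≤ r ∧ r < 1 ∧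
      ∃ n : ℕ, (r * (p : ℚ) ^ n).den = 1 :=
    ⟨0, by simpa using hx, le_refl 0, by norm_num, ⟨0, by norm_num⟩⟩
  rw [padicFract, dif_pos hex]
  obtain ⟨hle, h0, h1, hden⟩ := hex.choose_spec
  set r := hex.choose with hrdef
  have hnr : ‖(r : ℚ_[p])‖ ≤ 1 := by
    have heq : (r : ℚ_[p]) = x + -(x - (r : ℚ_[p])) := by ring
    rw [heq]
    calc ‖x + -(x - (r : ℚ_[p]))‖ ≤ max ‖x‖ ‖-(x - (r : ℚ_[p]))‖ := Padic.nonarchimedean _ _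
      _ ≤ 1 := max_le hx (by rwa [norm_neg])
  exact aux_rat_eq_zero p (abs_lt.mpr ⟨by linarith, h1⟩) hden hnr

lemma padicChar_eq_one {x : ℚ_[p]} (hx : ‖x‖ ≤ 1) : padicChar p x = 1 := by
  rw [padicChar, padicFract_eq_zero p hx]
  simp

lemma padicChar_norm (x : ℚ_[p]) : ‖padicChar p x‖ = 1 := by
  rw [padicChar]
  have : (2 * (Real.pi : ℂ) * Complex.I * ((padicFract p x : ℝ) : ℂ))
      = ((2 * Real.pi * (padicFract p x : ℝ) : ℝ) : ℂ) * Complex.I := by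
    push_cast; ring
  rw [this, Complex.norm_exp_ofReal_mul_I]

end Aux
section Meas
variable (p : ℕ) [hp : Fact p.Prime]

lemma aux_ball_measurable (c : ℝ) : MeasurableSet {z : ℚ_[p] | ‖z‖ ≤ c} :=
  measurableSet_le measurable_norm measurable_const

lemma aux_ball_step (μ : Measure ℚ_[p]) [μ.IsAddHaarMeasure] (k : ℤ) :
    μ {z : ℚ_[p] | ‖z‖ ≤ (p : ℝ) ^ (k + 1)} = p * μ {z : ℚ_[p] | ‖z‖ ≤ (p : ℝ) ^ k} := by
  have hp0 : (0 : ℝ) < p := by exact_mod_cast hp.out.pos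
  have hp1 : (1 : ℝ) < p := by exact_mod_cast hp.out.one_lt
  have hpQ : ((p : ℚ_[p])) ≠ 0 := by exact_mod_cast hp.out.ne_zero
  set c : ℕ → ℚ_[p] := fun j => (j : ℚ_[p]) * (p : ℚ_[p]) ^ (-(k + 1)) with hc
  set T : ℕ → Set ℚ_[p] := fun j => {z : ℚ_[p] | ‖z - c j‖ ≤ (p : ℝ) ^ k} with hT
  have hnormc : ∀ j : ℕ, ‖c j‖ ≤ (p : ℝ) ^ (k + 1) := by
    intro j
    rw [hc, norm_mul, Padic.norm_p_zpow, neg_neg]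
    calc ‖((j : ℤ) : ℚ_[p])‖ * (p : ℝ) ^ (k + 1) ≤ 1 * (p : ℝ) ^ (k + 1) :=
          mul_le_mul_of_nonneg_right (Padic.norm_int_le_one _) (by positivity)
      _ = _ := one_mul _
  have hdecomp : {z : ℚ_[p] | ‖z‖ ≤ (p : ℝ) ^ (k + 1)} = ⋃ j ∈ Finset.range p, T j := by
    ext z
    simp only [Set.mem_setOf_eq, Set.mem_iUnion, Finset.mem_range, exists_prop]
    constructor
    · intro hz
      set y : ℚ_[p] := z * (p : ℚ_[p]) ^ (k + 1) with hy
      have hyn : ‖y‖ ≤ 1 := by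
        rw [hy, norm_mul, Padic.norm_p_zpow]
        calc ‖z‖ * (p : ℝ) ^ (-(k + 1)) ≤ (p : ℝ) ^ (k + 1) * (p : ℝ) ^ (-(k + 1)) :=
              mul_le_mul_of_nonneg_right hz (by positivity)
          _ = 1 := by
              rw [← zpow_add₀ (ne_of_gt hp0), show k + 1 + -(k + 1) = 0 by ring, zpow_zero]
      set Y : ℤ_[p] := ⟨y, hyn⟩ with hY
      obtain ⟨j, hjp, hjmem⟩ := PadicInt.exists_mem_range (x := Y)
      refine ⟨j, hjp, ?_⟩
      have hjn : ‖Y - (j : ℤ_[p])‖ < 1 := by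
        rw [PadicInt.maximalIdeal_eq_span_p, Ideal.mem_span_singleton,
          ← PadicInt.norm_lt_one_iff_dvd] at hjmem
        exact hjmem
      have hjn' : ‖y - (j : ℚ_[p])‖ ≤ (p : ℝ) ^ (-1 : ℤ) := by
        have : ‖y - (j : ℚ_[p])‖ < (p : ℝ) ^ (0 : ℤ) := by
          simpa [PadicInt.norm_def] using hjn
        rwa [show (0 : ℤ) = -1 + 1 by ring, ← Padic.norm_le_pow_iff_norm_lt_pow_add_one] at this
      have hcancel : (p : ℚ_[p]) ^ (k + 1) * (p : ℚ_[p]) ^ (-(k + 1)) = 1 := by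
        rw [← zpow_add₀ hpQ, show k + 1 + -(k + 1) = 0 by ring, zpow_zero]
      have hzeq : z - c j = (y - (j : ℚ_[p])) * (p : ℚ_[p]) ^ (-(k + 1)) := by
        calc z - c j = z * ((p : ℚ_[p]) ^ (k + 1) * (p : ℚ_[p]) ^ (-(k + 1))) - c j := by
              rw [hcancel, mul_one]
          _ = (y - (j : ℚ_[p])) * (p : ℚ_[p]) ^ (-(k + 1)) := by rw [hy, hc]; ring
      show ‖z - c j‖ ≤ (p : ℝ) ^ k
      rw [hzeq, norm_mul, Padic.norm_p_zpow, neg_neg]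
      calc ‖y - (j : ℚ_[p])‖ * (p : ℝ) ^ (k + 1)
          ≤ (p : ℝ) ^ (-1 : ℤ) * (p : ℝ) ^ (k + 1) :=
            mul_le_mul_of_nonneg_right hjn' (by positivity)
        _ = (p : ℝ) ^ k := by rw [← zpow_add₀ (ne_of_gt hp0)]; ring_nf
    · rintro ⟨j, _, hj⟩
      have : ‖z‖ ≤ max ‖z - c j‖ ‖c j‖ := by
        calc ‖z‖ = ‖(z - c j) + c j‖ := by ring_nf
          _ ≤ max ‖z - c j‖ ‖c j‖ := Padic.nonarchimedean _ _
      refine this.trans (max_le (hj.trans ?_) (hnormc j))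
      exact zpow_le_zpow_right₀ (le_of_lt hp1) (by omega)
  have hTmeas : ∀ j : ℕ, MeasurableSet (T j) := by
    intro j
    have : T j = (fun z : ℚ_[p] => -c j + z) ⁻¹' {z : ℚ_[p] | ‖z‖ ≤ (p : ℝ) ^ k} := by
      ext z; simp [hT, neg_add_eq_sub]
    rw [this]
    exact (measurable_const_add _) (aux_ball_measurable p _)
  have hdisj : (↑(Finset.range p) : Set ℕ).PairwiseDisjoint T := by
    intro i hi j hj hij
    simp only [Finset.coe_range, Set.mem_Iio] at hi hj
    refine Set.disjoint_left.mpr fun z hzi hzj => ?_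
    have hdiff : ‖c i - c j‖ = (p : ℝ) ^ (k + 1) := by
      have hne : ¬ ((p : ℤ) ∣ ((i : ℤ) - (j : ℤ))) := by
        intro hdvd
        have := Int.eq_zero_of_abs_lt_dvd hdvd (by rw [abs_lt]; constructor <;> omega)
        omega
      have h1 : ‖((i : ℚ_[p]) - (j : ℚ_[p]))‖ = 1 := by
        have hle := Padic.norm_int_le_one (p := p) ((i : ℤ) - (j : ℤ))
        have hlt := (Padic.norm_intCast_lt_one_iff (p := p) (k := (i : ℤ) - (j : ℤ)))
        push_cast at hle hlt
        rcases lt_or_eq_of_le hle with h | h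
        · exact absurd (hlt.mp h) hne
        · exact h
      rw [hc]
      have : (i : ℚ_[p]) * (p : ℚ_[p]) ^ (-(k + 1)) - (j : ℚ_[p]) * (p : ℚ_[p]) ^ (-(k + 1))
          = ((i : ℚ_[p]) - (j : ℚ_[p])) * (p : ℚ_[p]) ^ (-(k + 1)) := by ring
      rw [this, norm_mul, Padic.norm_p_zpow, neg_neg, h1, one_mul]
    have hle : ‖c i - c j‖ ≤ (p : ℝ) ^ k := by
      have : c i - c j = (z - c j) - (z - c i) := by ring
      rw [this, sub_eq_add_neg]
      calc ‖(z - c j) + -(z - c i)‖ ≤ max ‖z - c j‖ ‖-(z - c i)‖ := Padic.nonarchimedean _ _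
        _ ≤ (p : ℝ) ^ k := max_le hzj (by rw [norm_neg]; exact hzi)
    rw [hdiff] at hle
    have : (p : ℝ) ^ (k + 1) > (p : ℝ) ^ k := zpow_lt_zpow_right₀ hp1 (by omega)
    linarith
  rw [hdecomp, measure_biUnion_finset hdisj fun j _ => hTmeas j]
  have hTμ : ∀ j : ℕ, μ (T j) = μ {z : ℚ_[p] | ‖z‖ ≤ (p : ℝ) ^ k} := by
    intro j
    have : T j = (fun z : ℚ_[p] => -c j + z) ⁻¹' {z : ℚ_[p] | ‖z‖ ≤ (p : ℝ) ^ k} := by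
      ext z; simp [hT, neg_add_eq_sub]
    rw [this, measure_preimage_add]
  simp only [hTμ]
  rw [Finset.sum_const, Finset.card_range, nsmul_eq_mul]

lemma aux_ball_measure (μ : Measure ℚ_[p]) [μ.IsAddHaarMeasure]
    (hμ : μ {x : ℚ_[p] | ‖x‖ ≤ 1} = 1) (k : ℤ) :
    μ {z : ℚ_[p] | ‖z‖ ≤ (p : ℝ) ^ k} = ENNReal.ofReal ((p : ℝ) ^ k) := by
  have hp0 : (0 : ℝ) < p := by exact_mod_cast hp.out.pos
  have hpE0 : (p : ENNReal) ≠ 0 := by exact_mod_cast hp.out.ne_zero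
  have hpEt : (p : ENNReal) ≠ ⊤ := ENNReal.natCast_ne_top p
  have hofp : (p : ENNReal) = ENNReal.ofReal (p : ℝ) := by
    rw [ENNReal.ofReal_natCast]
  induction k using Int.induction_on with
  | zero => simpa using hμ
  | succ i ih =>
      rw [aux_ball_step p μ i, ih, hofp, ← ENNReal.ofReal_mul (le_of_lt hp0)]
      congr 1
      rw [zpow_add_one₀ (ne_of_gt hp0)]
      ring
  | pred i ih =>
      have hstep := aux_ball_step p μ (-(i : ℤ) - 1)
      rw [show (-(i : ℤ) - 1 + 1) = -(i : ℤ) by ring, ih] at hstep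
      have : ENNReal.ofReal ((p : ℝ) ^ (-(i : ℤ)))
          = (p : ENNReal) * ENNReal.ofReal ((p : ℝ) ^ (-(i : ℤ) - 1)) := by
        rw [hofp, ← ENNReal.ofReal_mul (le_of_lt hp0)]
        congr 1
        rw [show (-(i : ℤ)) = (-(i : ℤ) - 1) + 1 by ring, zpow_add_one₀ (ne_of_gt hp0)]
        ring_nf
      rw [this] at hstep
      exact (ENNReal.mul_right_inj hpE0 hpEt).mp hstep.symm
end Meas



/-- Upper bound for `A_s(ξ)`: there is `C₁ > 0` such that for all `ξ` with
`|ξ|_p ≥ p^{-N+1}`, `A_s(ξ) = ∫_{B_N} |χ(zξ)-1|²/|z|_p^{2s+1} dz ≤ C₁ |ξ|_p^{2s}`. -/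
theorem padic_As_upper_bound (p : ℕ) [Fact p.Prime] (N : ℤ) (s : ℝ)
    (hs : s ∈ Set.Ioo (0 : ℝ) 1)
    (μ : Measure ℚ_[p]) [μ.IsAddHaarMeasure] (hμ : μ {x : ℚ_[p] | ‖x‖ ≤ 1} = 1) :
    ∃ C₁ : ℝ, 0 < C₁ ∧ ∀ ξ : ℚ_[p], (p : ℝ) ^ (-N + 1) ≤ ‖ξ‖ →
      (∫ z in {z : ℚ_[p] | ‖z‖ ≤ (p : ℝ) ^ N},
          ‖padicChar p (z * ξ) - 1‖ ^ 2 / ‖z‖ ^ (2 * s + 1) ∂μ) ≤ C₁ * ‖ξ‖ ^ (2 * s) := by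
  obtain ⟨hs0, hs1⟩ := hs
  have hp0 : (0 : ℝ) < p := by exact_mod_cast (Fact.out : p.Prime).pos
  have hp1 : (1 : ℝ) < p := by exact_mod_cast (Fact.out : p.Prime).one_lt
  set r : ℝ := (p : ℝ) ^ (-(2 * s)) with hr
  have hr0 : 0 < r := Real.rpow_pos_of_pos hp0 _
  have hr1 : r < 1 := Real.rpow_lt_one_of_one_lt_of_neg hp1 (by linarith)
  have h1r : 0 < 1 - r := by linarith
  refine ⟨4 * r / (1 - r), div_pos (by positivity) h1r, ?_⟩
  intro ξ hξ
  have hξ0 : ξ ≠ 0 := by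
    intro h
    rw [h, norm_zero] at hξ
    have : (0 : ℝ) < (p : ℝ) ^ (-N + 1) := by positivity
    linarith
  set m : ℤ := -ξ.valuation with hm
  have hnormξ : ‖ξ‖ = (p : ℝ) ^ m := Padic.norm_eq_zpow_neg_valuation hξ0
  have hmN : 1 - m ≤ N := by
    rw [hnormξ] at hξ
    have := (zpow_le_zpow_iff_right₀ hp1).mp hξ
    omega
  set n : ℕ := (N + m).toNat with hn
  set B : Set ℚ_[p] := {z : ℚ_[p] | ‖z‖ ≤ (p : ℝ) ^ N} with hB
  have hBmeas : MeasurableSet B := aux_ball_measurable p _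
  set S : ℤ → Set ℚ_[p] := fun k => {z : ℚ_[p] | ‖z‖ = (p : ℝ) ^ k} with hS
  have hSmeas : ∀ k : ℤ, MeasurableSet (S k) := fun k =>
    measurable_norm (measurableSet_singleton ((p : ℝ) ^ k))
  set c : ℤ → ℝ := fun k => 4 / ((p : ℝ) ^ k) ^ (2 * s + 1) with hcdef
  have hcnn : ∀ k : ℤ, 0 ≤ c k := fun k => by
    have : (0:ℝ) < (p : ℝ) ^ k := by positivity
    have : (0:ℝ) < ((p : ℝ) ^ k) ^ (2 * s + 1) := Real.rpow_pos_of_pos this _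
    positivity
  set g : ℚ_[p] → ℝ := fun z =>
    ∑ j ∈ Finset.range n, (S (1 - m + j)).indicator (fun _ => c (1 - m + j)) z with hg
  have hgnn : ∀ z, 0 ≤ g z := fun z =>
    Finset.sum_nonneg fun j _ => Set.indicator_nonneg (fun _ _ => hcnn _) z
  -- each indicator is integrable on B
  have hint_each : ∀ j : ℕ, Integrable
      ((S (1 - m + j)).indicator fun _ => c (1 - m + j)) (μ.restrict B) := by
    intro j
    rw [integrable_indicator_iff (hSmeas _)]
    refine (integrableOn_const_iff enorm_ne_top).mpr (Or.inr ?_)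
    calc μ.restrict B (S (1 - m + j)) ≤ μ (S (1 - m + j)) := Measure.restrict_apply_le _ _
      _ ≤ μ {z : ℚ_[p] | ‖z‖ ≤ (p : ℝ) ^ (1 - m + j)} := measure_mono fun z hz => le_of_eq hz
      _ = ENNReal.ofReal ((p : ℝ) ^ (1 - m + j)) := aux_ball_measure p μ hμ _
      _ < ⊤ := ENNReal.ofReal_lt_top
  have hgint : Integrable g (μ.restrict B) := by
    rw [hg]
    exact integrable_finset_sum _ fun j _ => hint_each j
  -- measure bound on shells
  have hμS : ∀ k : ℤ, (μ.restrict B (S k)).toReal ≤ (p : ℝ) ^ k := by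
    intro k
    have h2 : μ.restrict B (S k) ≤ ENNReal.ofReal ((p : ℝ) ^ k) := by
      calc μ.restrict B (S k) ≤ μ (S k) := Measure.restrict_apply_le _ _
        _ ≤ μ {z : ℚ_[p] | ‖z‖ ≤ (p : ℝ) ^ k} := measure_mono fun z hz => le_of_eq hz
        _ = ENNReal.ofReal ((p : ℝ) ^ k) := aux_ball_measure p μ hμ _
    calc (μ.restrict B (S k)).toReal ≤ (ENNReal.ofReal ((p : ℝ) ^ k)).toReal :=
          ENNReal.toReal_mono ENNReal.ofReal_ne_top h2
      _ = (p : ℝ) ^ k := ENNReal.toReal_ofReal (by positivity)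
  -- pointwise bound
  have hkey : ∀ z ∈ B, ‖padicChar p (z * ξ) - 1‖ ^ 2 / ‖z‖ ^ (2 * s + 1) ≤ g z := by
    intro z hzB
    by_cases hzle : ‖z‖ ≤ (p : ℝ) ^ (-m)
    · have hone : ‖z * ξ‖ ≤ 1 := by
        rw [norm_mul, hnormξ]
        calc ‖z‖ * (p : ℝ) ^ m ≤ (p : ℝ) ^ (-m) * (p : ℝ) ^ m :=
              mul_le_mul_of_nonneg_right hzle (by positivity)
          _ = 1 := by rw [← zpow_add₀ (ne_of_gt hp0), show -m + m = 0 by ring, zpow_zero]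
      rw [padicChar_eq_one p hone, sub_self, norm_zero,
        show ((0:ℝ)) ^ 2 = 0 by norm_num, zero_div]
      exact hgnn z
    · push_neg at hzle
      have hzne : z ≠ 0 := by
        intro h
        rw [h, norm_zero] at hzle
        have : (0 : ℝ) < (p : ℝ) ^ (-m) := by positivity
        linarith
      set k : ℤ := -z.valuation with hk
      have hnz : ‖z‖ = (p : ℝ) ^ k := Padic.norm_eq_zpow_neg_valuation hzne
      have hk1 : 1 - m ≤ k := by
        rw [hnz] at hzle
        have := (zpow_lt_zpow_iff_right₀ hp1).mp hzle
        omega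
      have hk2 : k ≤ N := by
        have hzB' : ‖z‖ ≤ (p : ℝ) ^ N := hzB
        rw [hnz] at hzB'
        exact (zpow_le_zpow_iff_right₀ hp1).mp hzB'
      set j₀ : ℕ := (k - (1 - m)).toNat with hj₀
      have hj₀mem : j₀ ∈ Finset.range n := Finset.mem_range.mpr (by omega)
      have hkj : 1 - m + (j₀ : ℤ) = k := by omega
      have hzS : z ∈ S k := hnz
      have hnum : ‖padicChar p (z * ξ) - 1‖ ^ 2 ≤ 4 := by
        have h2' : ‖padicChar p (z * ξ) - 1‖ ≤ 2 := by
          calc ‖padicChar p (z * ξ) - 1‖ ≤ ‖padicChar p (z * ξ)‖ + ‖(1:ℂ)‖ := norm_sub_le _ _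
            _ = 2 := by rw [padicChar_norm, norm_one]; norm_num
        calc ‖padicChar p (z * ξ) - 1‖ ^ 2 ≤ 2 ^ 2 :=
              pow_le_pow_left₀ (norm_nonneg _) h2' 2
          _ = 4 := by norm_num
      have hfz : ‖padicChar p (z * ξ) - 1‖ ^ 2 / ‖z‖ ^ (2 * s + 1) ≤ c k := by
        rw [hnz]
        have h4 : c k = 4 / ((p : ℝ) ^ k) ^ (2 * s + 1) := rfl
        rw [h4]
        have hpos : (0:ℝ) < ((p : ℝ) ^ k) ^ (2 * s + 1) :=
          Real.rpow_pos_of_pos (by positivity) _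
        gcongr
      have hcg : c k ≤ g z := by
        rw [hg]
        have heq : (S (1 - m + (j₀:ℤ))).indicator (fun _ => c (1 - m + (j₀:ℤ))) z = c k := by
          rw [hkj, Set.indicator_of_mem hzS]
        calc c k = (S (1 - m + (j₀:ℤ))).indicator (fun _ => c (1 - m + (j₀:ℤ))) z := heq.symm
          _ ≤ ∑ j ∈ Finset.range n, (S (1 - m + j)).indicator (fun _ => c (1 - m + j)) z :=
            Finset.single_le_sum
              (f := fun j : ℕ => (S (1 - m + (j:ℤ))).indicator (fun _ => c (1 - m + (j:ℤ))) z)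
              (fun j _ => Set.indicator_nonneg (fun _ _ => hcnn _) z) hj₀mem
      exact hfz.trans hcg
  -- term computation
  have hterm : ∀ k : ℤ, (p : ℝ) ^ k * c k = 4 * r ^ k := by
    intro k
    have hPk : ((p : ℝ) ^ k) = (p : ℝ) ^ ((k : ℤ) : ℝ) := (Real.rpow_intCast _ _).symm
    have hrk : r ^ k = (p : ℝ) ^ ((-(2 * s)) * ((k : ℤ) : ℝ)) := by
      rw [← Real.rpow_intCast r k, hr, ← Real.rpow_mul (le_of_lt hp0)]
    show (p : ℝ) ^ k * (4 / ((p : ℝ) ^ k) ^ (2 * s + 1)) = 4 * r ^ k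
    rw [hrk, hPk, ← Real.rpow_mul (le_of_lt hp0), div_eq_mul_inv,
      ← Real.rpow_neg (le_of_lt hp0), mul_comm, mul_assoc, ← Real.rpow_add hp0]
    congr 1
    ring
  calc (∫ z in B, ‖padicChar p (z * ξ) - 1‖ ^ 2 / ‖z‖ ^ (2 * s + 1) ∂μ)
      ≤ ∫ z in B, g z ∂μ := by
        refine integral_mono_of_nonneg (ae_of_all _ fun z => by positivity) hgint ?_
        filter_upwards [ae_restrict_mem hBmeas] with z hz using hkey z hz
    _ = ∑ j ∈ Finset.range n, ∫ z in B,
          (S (1 - m + j)).indicator (fun _ => c (1 - m + j)) z ∂μ := by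
        rw [hg]
        exact integral_finset_sum _ fun j _ => hint_each j
    _ = ∑ j ∈ Finset.range n, (μ.restrict B (S (1 - m + (j:ℤ)))).toReal • c (1 - m + (j:ℤ)) :=
        Finset.sum_congr rfl fun j _ => integral_indicator_const _ (hSmeas _)
    _ ≤ ∑ j ∈ Finset.range n, (p : ℝ) ^ (1 - m + (j:ℤ)) * c (1 - m + (j:ℤ)) :=
        Finset.sum_le_sum fun j _ => by
          rw [smul_eq_mul]
          exact mul_le_mul_of_nonneg_right (hμS _) (hcnn _)
    _ = ∑ j ∈ Finset.range n, (4 * r ^ ((1:ℤ) - m)) * r ^ (j : ℕ) := by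
        refine Finset.sum_congr rfl fun j _ => ?_
        rw [hterm, zpow_add₀ (ne_of_gt hr0), zpow_natCast]
        ring
    _ = (4 * r ^ ((1:ℤ) - m)) * ∑ j ∈ Finset.range n, r ^ j := by rw [← Finset.mul_sum]
    _ ≤ (4 * r ^ ((1:ℤ) - m)) * (1 - r)⁻¹ := by
        refine mul_le_mul_of_nonneg_left ?_ (by positivity)
        calc ∑ j ∈ Finset.range n, r ^ j ≤ ∑' j : ℕ, r ^ j :=
              (summable_geometric_of_lt_one (le_of_lt hr0) hr1).sum_le_tsum _
                (fun i _ => by positivity)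
          _ = (1 - r)⁻¹ := tsum_geometric_of_lt_one (le_of_lt hr0) hr1
    _ = (4 * r / (1 - r)) * ‖ξ‖ ^ (2 * s) := by
        have hxi2s : ‖ξ‖ ^ (2 * s) = r ^ (-m) := by
          have h1 : ‖ξ‖ = (p : ℝ) ^ ((m : ℤ) : ℝ) := by
            rw [hnormξ, Real.rpow_intCast]
          have h2 : r ^ (-m) = (p : ℝ) ^ ((-(2 * s)) * ((-m : ℤ) : ℝ)) := by
            rw [← Real.rpow_intCast r (-m), hr, ← Real.rpow_mul (le_of_lt hp0)]
          rw [h1, h2, ← Real.rpow_mul (le_of_lt hp0)]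
          congr 1
          push_cast
          ring
        rw [hxi2s, show (1:ℤ) - m = 1 + (-m) by ring, zpow_add₀ (ne_of_gt hr0), zpow_one]
        field_simp
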